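/- For every z > 0, 2·∫₀^∞ sinh²(z·x)/sinh²((z+1)·x) dx = (1/(z+1))·(1 − π·z·cot(πz/(z+1))/(z+1)). -/

import Mathlib

open MeasureTheory Real Set

lemma tne (t : ℝ) (h0 : 0 < t) (h1 : t < 1) (n : ℤ) : t - n ≠ 0 ∧ t + n ≠ 0 := by
  constructor <;> intro h
  · have : (n:ℝ) = t := by linarith
    rcases le_or_gt n 0 with hn | hn
    · have : (n:ℝ) ≤ 0 := by exact_mod_cast hn
      linarith
    · have : (1:ℝ) ≤ n := by exact_mod_cast hn
      linarith
  · have : (n:ℝ) = -t := by linarith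
    rcases le_or_gt n (-1) with hn | hn
    · have : (n:ℝ) ≤ -1 := by exact_mod_cast hn
      linarith
    · have : (0:ℝ) ≤ n := by exact_mod_cast (by omega : (0:ℤ) ≤ n)
      linarith

lemma exp_int_neg_pi (n : ℤ) : Complex.exp (2 * π * Complex.I * n * (-π) / (2*π)) = (-1)^n := by
  have hπ : (π:ℂ) ≠ 0 := by exact_mod_cast Real.pi_ne_zero
  have : (2 * π * Complex.I * n * (-π) / (2*π)) = (-n) * (π * Complex.I) := by
    field_simp
  rw [this, show (-(n:ℂ)) = ((-n : ℤ):ℂ) by push_cast; ring, Complex.exp_int_mul,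
    Complex.exp_pi_mul_I, zpow_neg, ← inv_zpow, inv_neg, inv_one]

lemma exp_integral_sym (θ : ℝ) (hθ : θ ≠ 0) :
    ∫ x in (-π)..π, Complex.exp ((θ:ℂ) * Complex.I * x) = 2 * Real.sin (θ*π) / θ := by
  have hc : (θ:ℂ) * Complex.I ≠ 0 :=
    mul_ne_zero (Complex.ofReal_ne_zero.2 hθ) Complex.I_ne_zero
  rw [integral_exp_mul_complex hc]
  have h1 : (θ:ℂ) * Complex.I * (π:ℝ) = ((θ*π : ℝ):ℂ) * Complex.I := by push_cast; ring
  have h2 : (θ:ℂ) * Complex.I * ((-π:ℝ):ℂ) = ((-(θ*π) : ℝ):ℂ) * Complex.I := by push_cast; ring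
  rw [h1, h2, Complex.exp_mul_I, Complex.exp_mul_I, ← Complex.ofReal_cos, ← Complex.ofReal_sin,
    ← Complex.ofReal_cos, ← Complex.ofReal_sin, Real.cos_neg, Real.sin_neg]
  have hθ' : (θ:ℂ) ≠ 0 := Complex.ofReal_ne_zero.2 hθ
  push_cast
  field_simp
  ring

lemma coeffJ (t : ℝ) (h0 : 0 < t) (h1 : t < 1) (n : ℤ) :
    ∫ x in (-π)..π, (fourier (-n) (x : AddCircle (2*π)) : ℂ) * ((Real.cos (t*x) : ℝ) : ℂ)
      = (((-1:ℝ)^n * (Real.sin (t*π) * (2*t) / (t^2 - (n:ℝ)^2)) : ℝ) : ℂ) := by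
  obtain ⟨hmn, hpn⟩ := tne t h0 h1 n
  have hπ : (π:ℂ) ≠ 0 := by exact_mod_cast Real.pi_ne_zero
  have step : ∀ x : ℝ, (fourier (-n) (x : AddCircle (2*π)) : ℂ) * ((Real.cos (t*x) : ℝ) : ℂ)
      = (Complex.exp ((((t - n):ℝ):ℂ) * Complex.I * x)
        + Complex.exp ((((-(t + n)):ℝ):ℂ) * Complex.I * x)) / 2 := by
    intro x
    rw [fourier_coe_apply, Complex.ofReal_cos, Complex.cos]
    rw [show ∀ A B C : ℂ, A * ((B + C)/2) = (A*B + A*C)/2 from fun A B C => by ring]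
    rw [← Complex.exp_add, ← Complex.exp_add]
    congr 2 <;> (congr 1; push_cast; field_simp; ring)
  rw [intervalIntegral.integral_congr (fun x _ => step x)]
  have i1 := exp_integral_sym (t - n) hmn
  have i2 := exp_integral_sym (-(t + n)) (neg_ne_zero.2 hpn)
  have c1 : Continuous fun x : ℝ => Complex.exp ((((t - n):ℝ):ℂ) * Complex.I * x) := by
    fun_prop
  have c2 : Continuous fun x : ℝ => Complex.exp ((((-(t + n)):ℝ):ℂ) * Complex.I * x) := by
    fun_prop
  rw [intervalIntegral.integral_div, intervalIntegral.integral_add (c1.intervalIntegrable _ _)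
    (c2.intervalIntegrable _ _), i1, i2]
  have s1 : Real.sin ((t-n)*π) = (-1:ℝ)^n * Real.sin (t*π) := by
    have := Real.sin_add_int_mul_pi (t*π) (-n)
    rw [show t*π + (-n:ℤ)*π = (t-n)*π by push_cast; ring] at this
    rw [this, zpow_neg, ← inv_zpow, inv_neg, inv_one]
  have s2 : Real.sin (-(t+n)*π) = -((-1:ℝ)^n * Real.sin (t*π)) := by
    have h := Real.sin_add_int_mul_pi (t*π) n
    rw [show t*π + (n:ℤ)*π = (t+n)*π by push_cast; ring] at h
    rw [show -(t+n)*π = -((t+n)*π) by ring, Real.sin_neg, h]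
  have hsq : t^2 - (n:ℝ)^2 ≠ 0 := by
    rw [show t^2-(n:ℝ)^2 = (t-n)*(t+n) by ring]; exact mul_ne_zero hmn hpn
  have key : (2*Real.sin ((t-n)*π)/(t-n) + 2*Real.sin (-(t+n)*π)/(-(t+n)))/2
      = (-1:ℝ)^n * (Real.sin (t*π) * (2*t)/(t^2-(n:ℝ)^2)) := by
    rw [s1, s2, mul_neg, neg_div_neg_eq]
    field_simp
    ring
  rw [← key]
  push_cast
  ring

lemma cot_hasSum {t : ℝ} (h0 : 0 < t) (h1 : t < 1) :
    HasSum (fun m : ℕ => 1/(((m:ℝ)+1)^2 - t^2))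
      ((1 - π*t*Real.cot (π*t))/(2*t^2)) := by
  haveI : Fact (0 < 2*π) := ⟨by positivity⟩
  set K : ℝ := Real.sin (t*π) * t / π with hK
  have hsin : Real.sin (t*π) ≠ 0 := by
    have := Real.sin_pos_of_pos_of_lt_pi (x := t*π) (by positivity)
      (by nlinarith [Real.pi_pos])
    linarith
  have hKne : K ≠ 0 := by
    simp only [hK, div_ne_zero_iff, mul_ne_zero_iff]
    exact ⟨⟨hsin, h0.ne'⟩, Real.pi_ne_zero⟩
  set f : ℝ → ℂ := fun x => ((Real.cos (t*x) : ℝ) : ℂ) with hf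
  have hend : f (-π) = f (-π + 2*π) := by
    simp only [hf, show t * (-π) = -(t*π) by ring, show t * (-π + 2*π) = t*π by ring,
      Real.cos_neg]
  have hcont : Continuous f := by fun_prop
  set F : C(AddCircle (2*π), ℂ) :=
    ⟨AddCircle.liftIco (2*π) (-π) f, AddCircle.liftIco_continuous hend hcont.continuousOn⟩
    with hF
  have hcoeff : ∀ n : ℤ, fourierCoeff (F : AddCircle (2*π) → ℂ) n
      = (((-1:ℝ)^n * (K / (t^2 - (n:ℝ)^2)) : ℝ) : ℂ) := by
    intro n
    have : fourierCoeff (F : AddCircle (2*π) → ℂ) n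
        = fourierCoeff (AddCircle.liftIco (2*π) (-π) f) n := rfl
    rw [this, fourierCoeff_liftIco_eq (T := 2*π) (a := -π) f n,
      fourierCoeffOn_eq_integral]
    have hfix : ∀ x : ℝ, (fourier (-n) (x : AddCircle (-π + 2*π - -π)) : ℂ) • f x
        = (fourier (-n) (x : AddCircle (2*π)) : ℂ) * ((Real.cos (t*x) : ℝ) : ℂ) := by
      intro x
      rw [smul_eq_mul]
      congr 1
      rw [fourier_coe_apply, fourier_coe_apply]
      norm_num
    rw [intervalIntegral.integral_congr (fun x _ => hfix x)]
    rw [show (-π + 2*π : ℝ) = π by ring, coeffJ t h0 h1 n]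
    rw [show (π - -π : ℝ) = 2*π by ring, Complex.real_smul]
    obtain ⟨hmn, hpn⟩ := tne t h0 h1 n
    have h2π : (π:ℂ) ≠ 0 := by exact_mod_cast Real.pi_ne_zero
    have hsqC : (t:ℂ)^2 - (n:ℂ)^2 ≠ 0 := by
      rw [show (t:ℂ)^2 - (n:ℂ)^2 = ((t:ℂ)-n)*((t:ℂ)+n) by ring]
      exact mul_ne_zero (by exact_mod_cast Complex.ofReal_ne_zero.2 hmn)
        (by exact_mod_cast Complex.ofReal_ne_zero.2 hpn)
    rw [hK]
    push_cast
    field_simp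
  have hnorm : ∀ n : ℤ, ‖fourierCoeff (F : AddCircle (2*π) → ℂ) n‖
      = |K| / |t^2 - (n:ℝ)^2| := by
    intro n
    rw [hcoeff n, Complex.norm_real, Real.norm_eq_abs]
    have h1 : ((-1:ℝ)^n) * ((-1:ℝ)^n) = 1 := by rw [← mul_zpow]; norm_num
    have habs : |(-1:ℝ)^n| = 1 := by
      have h2 := abs_mul ((-1:ℝ)^n) ((-1:ℝ)^n)
      rw [h1, abs_one] at h2
      nlinarith [abs_nonneg ((-1:ℝ)^n)]
    rw [abs_mul, habs, one_mul, abs_div]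
  have hmain : Summable (fun n : ℕ => |K| / |t^2 - ((n:ℝ))^2|) := by
    rw [← summable_nat_add_iff 1]
    have hsum2 : Summable (fun n : ℕ => |K|/(1-t^2) * (1/((n:ℝ)+1)^2)) := by
      apply Summable.mul_left
      have := (summable_nat_add_iff (f := fun n : ℕ => 1/(n:ℝ)^2) 1).2
        (summable_one_div_nat_pow.2 one_lt_two)
      apply this.congr
      intro n; push_cast; ring
    apply Summable.of_nonneg_of_le (fun n => by positivity) _ hsum2
    intro n
    have ht2 : t^2 < 1 := by nlinarith
    have hn0 : (0:ℝ) ≤ (n:ℝ) := Nat.cast_nonneg n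
    have hd0 : (0:ℝ) < (1-t^2) * ((n:ℝ)+1)^2 := by
      apply mul_pos (by linarith) (by positivity)
    have hle : (1-t^2) * ((n:ℝ)+1)^2 ≤ |t^2 - (((n:ℕ)+1:ℕ):ℝ)^2| := by
      push_cast
      rw [abs_of_nonpos (by nlinarith)]
      nlinarith [mul_nonneg (sq_nonneg t) (by positivity : (0:ℝ) ≤ (n:ℝ)^2+2*(n:ℝ))]
    calc |K| / |t^2 - (((n:ℕ)+1:ℕ):ℝ)^2| ≤ |K| / ((1-t^2) * ((n:ℝ)+1)^2) :=
          div_le_div_of_nonneg_left (abs_nonneg K) hd0 hle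
      _ = |K|/(1-t^2) * (1/((n:ℝ)+1)^2) := by
          rw [mul_one_div, div_div]
  have hsummable : Summable (fourierCoeff (F : AddCircle (2*π) → ℂ)) := by
    apply Summable.of_norm
    apply Summable.of_nat_of_neg <;> simp only [hnorm]
    · exact hmain
    · apply hmain.congr
      intro n
      push_cast
      ring_nf
  have hpt := has_pointwise_sum_fourier_series_of_summable hsummable (((-π : ℝ) : AddCircle (2*π)))
  have hfour : ∀ i : ℤ, (fourier i (((-π : ℝ) : AddCircle (2*π))) : ℂ) = (-1:ℂ)^i := by
    intro i
    rw [fourier_coe_apply]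
    rw [show (2*(π:ℂ)*Complex.I*(i:ℂ)*((-π:ℝ):ℂ)/((2*π:ℝ):ℂ))
        = 2*(π:ℂ)*Complex.I*(i:ℂ)*(-(π:ℂ))/(2*(π:ℂ)) by push_cast; ring]
    exact exp_int_neg_pi i
  have hterm : ∀ i : ℤ, fourierCoeff (F : AddCircle (2*π) → ℂ) i
      • (fourier i (((-π : ℝ) : AddCircle (2*π))) : ℂ) = ((K/(t^2 - (i:ℝ)^2) : ℝ) : ℂ) := by
    intro i
    rw [hcoeff i, hfour i, smul_eq_mul]
    have hsq : ((-1:ℂ)^i) * ((-1:ℂ)^i) = 1 := by rw [← mul_zpow]; norm_num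
    push_cast
    linear_combination ((K:ℂ)/((t:ℂ)^2-(i:ℂ)^2)) * hsq
  have hFx : F (((-π : ℝ) : AddCircle (2*π))) = ((Real.cos (t*π) : ℝ) : ℂ) := by
    show AddCircle.liftIco (2*π) (-π) f _ = _
    rw [AddCircle.liftIco_coe_apply ⟨le_refl _, by linarith [Real.pi_pos]⟩]
    simp only [hf]
    rw [show t*(-π) = -(t*π) by ring, Real.cos_neg]
  rw [funext hterm, hFx] at hpt
  have hreal : HasSum (fun i : ℤ => K/(t^2 - (i:ℝ)^2)) (Real.cos (t*π)) :=
    Complex.hasSum_ofReal.1 hpt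
  have h2 := hreal.nat_add_neg
  have e : (fun n : ℕ => K/(t^2 - ((n:ℤ):ℝ)^2) + K/(t^2 - (((-n):ℤ):ℝ)^2))
      = fun n : ℕ => 2*K/(t^2 - ((n:ℝ))^2) := by
    funext n; push_cast; ring
  rw [e, show t^2 - (((0:ℤ)):ℝ)^2 = t^2 by push_cast; ring] at h2
  have hval : Real.cos (t*π) + K/t^2
      = (Real.cos (t*π) - K/t^2) + ∑ i ∈ Finset.range 1, 2*K/(t^2 - (i:ℝ)^2) := by
    simp only [Finset.range_one, Finset.sum_singleton, Nat.cast_zero]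
    have ht2 : t^2 ≠ 0 := pow_ne_zero 2 h0.ne'
    field_simp
    ring
  rw [hval] at h2
  have h3 := (hasSum_nat_add_iff 1).2 h2
  have h4 := h3.div_const (-(2*K))
  have hd : ∀ n : ℕ, t^2 - (((n:ℕ)+1:ℕ):ℝ)^2 ≠ 0 := by
    intro n
    push_cast
    nlinarith [Nat.cast_nonneg (α := ℝ) n]
  have e2 : (fun n : ℕ => (2*K/(t^2 - (((n:ℕ)+1:ℕ):ℝ)^2))/(-(2*K)))
      = fun n : ℕ => 1/(((n:ℝ)+1)^2 - t^2) := by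
    funext n
    have ha := hd n
    have h5 : ((n:ℝ)+1)^2 - t^2 ≠ 0 := by push_cast at ha ⊢; intro h; exact ha (by linarith)
    rw [div_eq_div_iff (neg_ne_zero.2 (by simpa using hKne : (2*K) ≠ 0)) h5,
      div_mul_eq_mul_div, div_eq_iff ha]
    push_cast
    ring
  have hveq : (Real.cos (t*π) - K/t^2)/(-(2*K)) = (1 - π*t*Real.cot (π*t))/(2*t^2) := by
    rw [Real.cot_eq_cos_div_sin, show π*t = t*π by ring, hK]
    have ht2 : t ≠ 0 := h0.ne'
    field_simp
    ring
  rw [e2, hveq] at h4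
  exact h4

lemma integral_exp_neg_mul_Ioi {c : ℝ} (hc : 0 < c) :
    ∫ x in Set.Ioi (0:ℝ), Real.exp (-(c*x)) = 1/c := by
  have h := integral_comp_mul_left_Ioi (fun x => Real.exp (-x)) 0 hc
  simp only [mul_zero] at h
  rw [show (fun x : ℝ => Real.exp (-(c*x))) = fun x : ℝ => Real.exp (-(c*x)) from rfl]
  calc ∫ x in Set.Ioi (0:ℝ), Real.exp (-(c*x)) = c⁻¹ • ∫ x in Set.Ioi (0:ℝ), Real.exp (-x) := h
    _ = 1/c := by rw [integral_exp_neg_Ioi_zero, smul_eq_mul, mul_one, one_div]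

lemma exp_neg_int_Ioi {c : ℝ} (hc : 0 < c) :
    IntegrableOn (fun x : ℝ => Real.exp (-(c*x))) (Set.Ioi (0:ℝ)) := by
  have := exp_neg_integrableOn_Ioi 0 hc
  simpa only [neg_mul] using this

lemma hterm_integral {z : ℝ} (hz : 0 < z) (m : ℕ) :
    IntegrableOn (fun x : ℝ => 4*((m:ℝ)+1) * Real.sinh (z*x)^2
        * Real.exp (-(2*(z+1)*((m:ℝ)+1)*x))) (Set.Ioi 0)
    ∧ ∫ x in Set.Ioi (0:ℝ), 4*((m:ℝ)+1) * Real.sinh (z*x)^2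
        * Real.exp (-(2*(z+1)*((m:ℝ)+1)*x))
      = z^2/((z+1)*((z+1)^2*((m:ℝ)+1)^2 - z^2)) := by
  have hm0 : (0:ℝ) ≤ (m:ℝ) := Nat.cast_nonneg m
  set c1 : ℝ := 2*(z+1)*((m:ℝ)+1) - 2*z with hc1def
  set c2 : ℝ := 2*(z+1)*((m:ℝ)+1) with hc2def
  set c3 : ℝ := 2*(z+1)*((m:ℝ)+1) + 2*z with hc3def
  have hc1 : 0 < c1 := by rw [hc1def]; nlinarith
  have hc2 : 0 < c2 := by rw [hc2def]; nlinarith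
  have hc3 : 0 < c3 := by rw [hc3def]; nlinarith
  have hident : ∀ x : ℝ, 4*((m:ℝ)+1) * Real.sinh (z*x)^2 * Real.exp (-(2*(z+1)*((m:ℝ)+1)*x))
      = ((m:ℝ)+1) * (Real.exp (-(c1*x)) - 2*Real.exp (-(c2*x)) + Real.exp (-(c3*x))) := by
    intro x
    have e1 : Real.exp (z*x) * Real.exp (z*x) * Real.exp (-(c2*x)) = Real.exp (-(c1*x)) := by
      rw [← Real.exp_add, ← Real.exp_add]; congr 1; rw [hc1def, hc2def]; ring
    have e2 : Real.exp (z*x) * Real.exp (-(z*x)) * Real.exp (-(c2*x))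
        = Real.exp (-(c2*x)) := by
      rw [← Real.exp_add, ← Real.exp_add]; congr 1; ring
    have e3 : Real.exp (-(z*x)) * Real.exp (-(z*x)) * Real.exp (-(c2*x))
        = Real.exp (-(c3*x)) := by
      rw [← Real.exp_add, ← Real.exp_add]; congr 1; rw [hc3def, hc2def]; ring
    rw [Real.sinh_eq, hc2def]
    linear_combination ((m:ℝ)+1)*e1 - 2*((m:ℝ)+1)*e2 + ((m:ℝ)+1)*e3
  have hint : IntegrableOn (fun x : ℝ => ((m:ℝ)+1) * (Real.exp (-(c1*x))
      - 2*Real.exp (-(c2*x)) + Real.exp (-(c3*x)))) (Set.Ioi 0) := by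
    exact ((((exp_neg_int_Ioi hc1).sub ((exp_neg_int_Ioi hc2).const_mul 2)).add
      (exp_neg_int_Ioi hc3)).const_mul _)
  constructor
  · exact hint.congr_fun (fun x _ => (hident x).symm) measurableSet_Ioi
  · rw [setIntegral_congr_fun measurableSet_Ioi (fun x _ => hident x)]
    have I2 : IntegrableOn (fun x : ℝ => 2*Real.exp (-(c2*x))) (Set.Ioi 0) :=
      (exp_neg_int_Ioi hc2).const_mul 2
    have I12 : IntegrableOn (fun x : ℝ => Real.exp (-(c1*x)) - 2*Real.exp (-(c2*x)))
        (Set.Ioi 0) := (exp_neg_int_Ioi hc1).sub I2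
    rw [integral_const_mul, integral_add I12 (exp_neg_int_Ioi hc3),
      integral_sub (exp_neg_int_Ioi hc1) I2,
      integral_const_mul, integral_exp_neg_mul_Ioi hc1, integral_exp_neg_mul_Ioi hc2,
      integral_exp_neg_mul_Ioi hc3]
    have hd : (z+1)^2*((m:ℝ)+1)^2 - z^2 ≠ 0 := by nlinarith
    rw [hc1def, hc2def, hc3def]
    have h1 : 2*(z+1)*((m:ℝ)+1) - 2*z ≠ 0 := by rw [hc1def] at hc1; linarith
    have h2 : 2*(z+1)*((m:ℝ)+1) ≠ 0 := by rw [hc2def] at hc2; linarith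
    have h3 : 2*(z+1)*((m:ℝ)+1) + 2*z ≠ 0 := by rw [hc3def] at hc3; linarith
    have hz1 : z + 1 ≠ 0 := by linarith
    have h1' : ((m:ℝ)+1)*(z+1) - z ≠ 0 := by nlinarith
    have hd' : ((m:ℝ)+1)^2*(z+1)^2 - z^2 ≠ 0 := by nlinarith
    field_simp
    ring

lemma hterm_hasSum {z : ℝ} (hz : 0 < z) {x : ℝ} (hx : 0 < x) :
    HasSum (fun m : ℕ => 4*((m:ℝ)+1) * Real.sinh (z*x)^2
        * Real.exp (-(2*(z+1)*((m:ℝ)+1)*x)))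
      (Real.sinh (z*x)^2 / Real.sinh ((z+1)*x)^2) := by
  set q : ℝ := Real.exp (-(2*(z+1)*x)) with hq
  have hq0 : 0 < q := Real.exp_pos _
  have hq1 : q < 1 := by
    rw [hq, Real.exp_lt_one_iff]
    nlinarith
  have hnorm : ‖q‖ < 1 := by rw [Real.norm_eq_abs, abs_of_pos hq0]; exact hq1
  have base := hasSum_coe_mul_geometric_of_norm_lt_one hnorm
  have base' : HasSum (fun m : ℕ => (((m:ℕ)+1:ℕ):ℝ) * q^((m:ℕ)+1)) (q/(1-q)^2) := by
    apply (hasSum_nat_add_iff (f := fun n : ℕ => (n:ℝ) * q^n) 1).2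
    simpa using base
  have mul := base'.mul_left (4 * Real.sinh (z*x)^2)
  have hqpow : ∀ k : ℕ, q^k = Real.exp (-(2*(z+1)*(k:ℝ)*x)) := by
    intro k
    rw [hq, ← Real.exp_nat_mul]
    congr 1
    ring
  have hfun : (fun m : ℕ => 4 * Real.sinh (z*x)^2 * ((((m:ℕ)+1:ℕ):ℝ) * q^((m:ℕ)+1)))
      = fun m : ℕ => 4*((m:ℝ)+1) * Real.sinh (z*x)^2 * Real.exp (-(2*(z+1)*((m:ℝ)+1)*x)) := by
    funext m
    rw [hqpow (m+1)]
    push_cast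
    ring
  have hsh : (0:ℝ) < Real.sinh ((z+1)*x) := by
    rw [Real.sinh_pos_iff]
    positivity
  set E : ℝ := Real.exp ((z+1)*x) with hE
  have hE0 : 0 < E := Real.exp_pos _
  have hqE : q = (E*E)⁻¹ := by
    rw [hq, hE, ← Real.exp_add, ← Real.exp_neg]
    congr 1
    ring
  have hshE : Real.sinh ((z+1)*x) = (E - E⁻¹)/2 := by
    rw [Real.sinh_eq, hE, Real.exp_neg]
  have key : 4*q*Real.sinh ((z+1)*x)^2 = (1-q)^2 := by
    rw [hqE, hshE]
    field_simp
    ring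
  have hval : 4 * Real.sinh (z*x)^2 * (q/(1-q)^2)
      = Real.sinh (z*x)^2 / Real.sinh ((z+1)*x)^2 := by
    rw [← key]
    have h1 : Real.sinh ((z+1)*x) ≠ 0 := hsh.ne'
    field_simp
  rw [hfun, hval] at mul
  exact mul

/-- For every `z > 0`,
`2 ∫₀^∞ sinh² (z x) / sinh² ((z+1) x) dx = (1/(z+1)) (1 - π z cot (π z/(z+1)) / (z+1))`. -/
theorem sinh_squared_integral (z : ℝ) (hz : 0 < z) :
    2 * ∫ x in Set.Ioi (0:ℝ), Real.sinh (z * x) ^ 2 / Real.sinh ((z + 1) * x) ^ 2 =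
      1 / (z + 1) * (1 - π * z * Real.cot (π * z / (z + 1)) / (z + 1)) := by
  have hb : (0:ℝ) < z + 1 := by linarith
  have ht0 : 0 < z/(z+1) := by positivity
  have ht1 : z/(z+1) < 1 := by rw [div_lt_one hb]; linarith
  have hA := (cot_hasSum ht0 ht1).mul_left (z^2/(z+1)^3)
  have hterm_eq : (fun m : ℕ => z^2/(z+1)^3 * (1/(((m:ℝ)+1)^2 - (z/(z+1))^2)))
      = fun m : ℕ => z^2/((z+1)*((z+1)^2*((m:ℝ)+1)^2 - z^2)) := by
    funext m
    have hm0 : (0:ℝ) ≤ (m:ℝ) := Nat.cast_nonneg m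
    have h5 : (1:ℝ) ≤ ((m:ℝ)+1)^2 := by nlinarith
    have hd2 : (z+1)^2*((m:ℝ)+1)^2 - z^2 ≠ 0 := by
      have h6 : (z+1)^2*1 ≤ (z+1)^2*(((m:ℝ)+1)^2) := by nlinarith
      nlinarith
    have key : ((m:ℝ)+1)^2 - (z/(z+1))^2 = ((z+1)^2*((m:ℝ)+1)^2 - z^2)/(z+1)^2 := by
      field_simp
    rw [key, one_div, inv_div, div_mul_div_comm, div_eq_div_iff
      (mul_ne_zero (by positivity) hd2) (mul_ne_zero hb.ne' hd2)]
    ring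
  rw [hterm_eq] at hA
  have hint := fun m : ℕ => (hterm_integral hz m).1
  have hval := fun m : ℕ => (hterm_integral hz m).2
  have hnormint : ∀ m : ℕ, (∫ x in Set.Ioi (0:ℝ), ‖4*((m:ℝ)+1) * Real.sinh (z*x)^2
        * Real.exp (-(2*(z+1)*((m:ℝ)+1)*x))‖)
      = z^2/((z+1)*((z+1)^2*((m:ℝ)+1)^2 - z^2)) := by
    intro m
    rw [← hval m]
    apply integral_congr_ae (Filter.Eventually.of_forall fun x => ?_)
    rw [Real.norm_eq_abs, abs_of_nonneg (by positivity)]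
  have hsummable : Summable (fun m : ℕ => ∫ x in Set.Ioi (0:ℝ), ‖4*((m:ℝ)+1)
      * Real.sinh (z*x)^2 * Real.exp (-(2*(z+1)*((m:ℝ)+1)*x))‖) :=
    hA.summable.congr (fun m => (hnormint m).symm)
  have hswap := MeasureTheory.hasSum_integral_of_summable_integral_norm hint hsummable
  simp only [hval] at hswap
  have htsum : ∀ x ∈ Set.Ioi (0:ℝ), (∑' m : ℕ, 4*((m:ℝ)+1) * Real.sinh (z*x)^2
        * Real.exp (-(2*(z+1)*((m:ℝ)+1)*x)))
      = Real.sinh (z*x)^2 / Real.sinh ((z+1)*x)^2 :=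
    fun x hx => (hterm_hasSum hz hx).tsum_eq
  rw [setIntegral_congr_fun measurableSet_Ioi htsum] at hswap
  have hI : ∫ x in Set.Ioi (0:ℝ), Real.sinh (z*x)^2 / Real.sinh ((z+1)*x)^2
      = z^2/(z+1)^3 * ((1 - π*(z/(z+1))*Real.cot (π*(z/(z+1))))/(2*(z/(z+1))^2)) :=
    hswap.unique hA
  rw [hI, show π*(z/(z+1)) = π*z/(z+1) by ring]
  field_simp
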